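/- arXiv:2012.01949 — 3 statements merged into one kernel-verified Lean document; each statement's English description precedes it below -/
import Mathlib

section
/- Let two pH-DAEs E_i ż_i = (J_i - R_i) z_i + G_i v_i, y_i = G_iᵀ z_i (i=1,2) be interconnected via [v₁; v₂] = F [y₁; y₂] + [ṽ₁; ṽ₂]. Then the aggregated system E ż = (J - R + G F Gᵀ) z + G ṽ, y = Gᵀ z, with block-diagonal E, J, R, G, is again a pH-DAE (i.e., can be written E ż = (J̃ - R̃) z + G ṽ with J̃ skew-symmetric, R̃ symmetric positive semi-definite) if and only if R - G F_sym Gᵀ is positive semi-definite, where F_sym = (F + Fᵀ)/2. -/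
open Matrix

lemma fromBlocks_posSemidef {n₁ n₂ : ℕ} {A : Matrix (Fin n₁) (Fin n₁) ℝ}
    {D : Matrix (Fin n₂) (Fin n₂) ℝ} (hA : A.PosSemidef) (hD : D.PosSemidef) :
    (fromBlocks A 0 0 D).PosSemidef := by
  rw [posSemidef_iff_dotProduct_mulVec]
  constructor
  · have : (fromBlocks A 0 0 D)ᴴ = fromBlocks Aᴴ 0ᴴ 0ᴴ Dᴴ := by
      rw [fromBlocks_conjTranspose]
    rw [IsHermitian, this, hA.1, hD.1]
    simp
  · intro x
    rw [fromBlocks_mulVec, dotProduct_block]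
    simp only [Sum.elim_comp_inl, Sum.elim_comp_inr, Matrix.zero_mulVec, add_zero, zero_add]
    exact add_nonneg (hA.dotProduct_mulVec_nonneg _) (hD.dotProduct_mulVec_nonneg _)

lemma decomp_iff {n : Type*} [Fintype n] [DecidableEq n] (M : Matrix n n ℝ) :
    (∃ (J' R' : Matrix n n ℝ), J'ᵀ = -J' ∧ R'.PosSemidef ∧ M = J' - R') ↔
      ((-(1/2 : ℝ)) • (M + Mᵀ)).PosSemidef := by
  constructor
  · rintro ⟨J', R', hJ', hR', rfl⟩
    have hR'sym : R'ᵀ = R' := hR'.1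
    have : (-(1/2 : ℝ)) • (J' - R' + (J' - R')ᵀ) = R' := by
      rw [transpose_sub, hJ', hR'sym]
      module
    rw [this]; exact hR'
  · intro h
    refine ⟨(1/2 : ℝ) • (M - Mᵀ), (-(1/2 : ℝ)) • (M + Mᵀ), ?_, h, ?_⟩
    · rw [transpose_smul, transpose_sub, transpose_transpose]
      module
    · module

/-- Power-conserving interconnection of two pH-DAEs: the aggregated system
`E ż = (J - R + G F Gᵀ) z + G ṽ, y = Gᵀ z` is again a pH-DAE if and only if
`R - G F_sym Gᵀ` is positive semi-definite. -/
theorem interconnection_pH_iff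
    {n₁ n₂ m₁ m₂ : ℕ}
    (E₁ J₁ R₁ : Matrix (Fin n₁) (Fin n₁) ℝ) (G₁ : Matrix (Fin n₁) (Fin m₁) ℝ)
    (E₂ J₂ R₂ : Matrix (Fin n₂) (Fin n₂) ℝ) (G₂ : Matrix (Fin n₂) (Fin m₂) ℝ)
    (hE₁ : E₁.PosSemidef) (hJ₁ : J₁ᵀ = -J₁) (hR₁ : R₁.PosSemidef)
    (hE₂ : E₂.PosSemidef) (hJ₂ : J₂ᵀ = -J₂) (hR₂ : R₂.PosSemidef)
    (F : Matrix (Fin m₁ ⊕ Fin m₂) (Fin m₁ ⊕ Fin m₂) ℝ) :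
    (let E := fromBlocks E₁ 0 0 E₂
     let J := fromBlocks J₁ 0 0 J₂
     let R := fromBlocks R₁ 0 0 R₂
     let G := fromBlocks G₁ 0 0 G₂
     (E.PosSemidef ∧
       ∃ (J' R' : Matrix (Fin n₁ ⊕ Fin n₂) (Fin n₁ ⊕ Fin n₂) ℝ),
         J'ᵀ = -J' ∧ R'.PosSemidef ∧ J - R + G * F * Gᵀ = J' - R') ↔
     (fromBlocks R₁ 0 0 R₂ -
        fromBlocks G₁ 0 0 G₂ * ((1 / 2 : ℝ) • (F + Fᵀ)) *
          (fromBlocks G₁ 0 0 G₂)ᵀ).PosSemidef) := by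
  intro E J R G
  set M : Matrix (Fin n₁ ⊕ Fin n₂) (Fin n₁ ⊕ Fin n₂) ℝ := J - R + G * F * Gᵀ with hM
  have hJT : Jᵀ = -J := by
    show (fromBlocks J₁ 0 0 J₂)ᵀ = -(fromBlocks J₁ 0 0 J₂)
    rw [fromBlocks_transpose, hJ₁, hJ₂, fromBlocks_neg]
    simp
  have hRT : Rᵀ = R := by
    show (fromBlocks R₁ 0 0 R₂)ᵀ = fromBlocks R₁ 0 0 R₂
    have h1 : R₁ᵀ = R₁ := hR₁.1
    have h2 : R₂ᵀ = R₂ := hR₂.1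
    rw [fromBlocks_transpose, h1, h2]
    simp
  have key : R - G * ((1 / 2 : ℝ) • (F + Fᵀ)) * Gᵀ = (-(1/2 : ℝ)) • (M + Mᵀ) := by
    rw [hM, transpose_add, transpose_sub, hJT, hRT, transpose_mul, transpose_mul,
      transpose_transpose]
    simp only [Matrix.mul_smul, Matrix.smul_mul, Matrix.mul_add, Matrix.add_mul, Matrix.mul_assoc]
    module
  constructor
  · rintro ⟨-, hex⟩
    rw [show R = fromBlocks R₁ 0 0 R₂ from rfl, show G = fromBlocks G₁ 0 0 G₂ from rfl] at key
    rw [key]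
    exact (decomp_iff M).mp hex
  · intro h
    refine ⟨fromBlocks_posSemidef hE₁ hE₂, (decomp_iff M).mpr ?_⟩
    rw [← key]
    exact h
end

section
/- The DAE [[0,0,0],[0,K_A,0],[0,0,M_M]] ż = [[0,-K_A,Dᵀ],[K_A,0,0],[-D,0,-K_K]] z + k, with K_A, M_M, K_K symmetric positive definite, has differentiation index 2: equivalently, the matrix pencil λE - A with E = diag(0, K_A, M_M) and A the above matrix is regular, and the nilpotent part of its Weierstraß canonical form has nilpotency index 2 (the index is not ≤ 1, since for a basis V of ker E and W of ker Eᵀ, Wᵀ A V = 0). -/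
open Matrix

section QSAux

variable {n m : ℕ}

private lemma qs_pd_mulVec_eq_zero {k : ℕ} {P : Matrix (Fin k) (Fin k) ℝ} (hP : P.PosDef)
    {x : Fin k → ℝ} (hx : P *ᵥ x = 0) : x = 0 := by
  by_contra h
  have h2 := hP.dotProduct_mulVec_pos h
  rw [hx] at h2
  simp at h2

private lemma qs_S_mulVec (KA : Matrix (Fin n) (Fin n) ℝ)
    (MM KK : Matrix (Fin m) (Fin m) ℝ) (D : Matrix (Fin m) (Fin n) ℝ)
    (lam : ℝ) (v : (Fin n ⊕ (Fin n ⊕ Fin m)) → ℝ) :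
    (lam • (fromBlocks 0 0 0 (fromBlocks KA 0 0 MM) :
        Matrix (Fin n ⊕ (Fin n ⊕ Fin m)) (Fin n ⊕ (Fin n ⊕ Fin m)) ℝ)
      - fromBlocks 0 (fromCols (-KA) Dᵀ) (fromRows KA (-D)) (fromBlocks 0 0 0 (-KK))) *ᵥ v
    = Sum.elim
        (KA *ᵥ (fun i => v (Sum.inr (Sum.inl i))) - Dᵀ *ᵥ (fun i => v (Sum.inr (Sum.inr i))))
        (Sum.elim
          (lam • (KA *ᵥ (fun i => v (Sum.inr (Sum.inl i)))) - KA *ᵥ (fun i => v (Sum.inl i)))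
          (lam • (MM *ᵥ (fun i => v (Sum.inr (Sum.inr i))))
            + (D *ᵥ (fun i => v (Sum.inl i)) + KK *ᵥ (fun i => v (Sum.inr (Sum.inr i)))))) := by
  funext i
  rcases i with i | i | i <;>
    simp [mulVec, dotProduct, Fintype.sum_sum_type, fromBlocks, fromCols, fromRows_apply_inl, fromRows_apply_inr,
      Matrix.sub_apply, Matrix.smul_apply, mul_comm, Finset.sum_sub_distrib, mul_add, add_mul, sub_mul,
      mul_sub, Finset.mul_sum, mul_assoc] <;>
    ring

private lemma qs_E_mulVec (KA : Matrix (Fin n) (Fin n) ℝ)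
    (MM : Matrix (Fin m) (Fin m) ℝ) (v : (Fin n ⊕ (Fin n ⊕ Fin m)) → ℝ) :
    (fromBlocks 0 0 0 (fromBlocks KA 0 0 MM) :
        Matrix (Fin n ⊕ (Fin n ⊕ Fin m)) (Fin n ⊕ (Fin n ⊕ Fin m)) ℝ) *ᵥ v
    = Sum.elim (0 : Fin n → ℝ) (Sum.elim (KA *ᵥ (fun i => v (Sum.inr (Sum.inl i))))
        (MM *ᵥ (fun i => v (Sum.inr (Sum.inr i))))) := by
  funext i
  rcases i with i | i | i <;>
    simp [mulVec, dotProduct, Fintype.sum_sum_type, fromBlocks]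

private lemma qs_regular (KA : Matrix (Fin n) (Fin n) ℝ)
    (MM KK : Matrix (Fin m) (Fin m) ℝ) (D : Matrix (Fin m) (Fin n) ℝ)
    (hKA : KA.PosDef) (hKK : KK.PosDef) :
    ((0:ℝ) • (fromBlocks 0 0 0 (fromBlocks KA 0 0 MM) :
        Matrix (Fin n ⊕ (Fin n ⊕ Fin m)) (Fin n ⊕ (Fin n ⊕ Fin m)) ℝ)
      - fromBlocks 0 (fromCols (-KA) Dᵀ) (fromRows KA (-D)) (fromBlocks 0 0 0 (-KK))).det
      ≠ 0 := by
  intro hdet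
  obtain ⟨v, hv0, hv⟩ := (Matrix.exists_mulVec_eq_zero_iff).mpr hdet
  rw [qs_S_mulVec] at hv
  have h1 : KA *ᵥ (fun i => v (Sum.inr (Sum.inl i)))
      - Dᵀ *ᵥ (fun i => v (Sum.inr (Sum.inr i))) = 0 :=
    funext fun i => congrFun hv (Sum.inl i)
  have h2 : (0:ℝ) • (KA *ᵥ (fun i => v (Sum.inr (Sum.inl i))))
      - KA *ᵥ (fun i => v (Sum.inl i)) = 0 :=
    funext fun i => congrFun hv (Sum.inr (Sum.inl i))
  have h3 : (0:ℝ) • (MM *ᵥ (fun i => v (Sum.inr (Sum.inr i))))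
      + (D *ᵥ (fun i => v (Sum.inl i)) + KK *ᵥ (fun i => v (Sum.inr (Sum.inr i)))) = 0 :=
    funext fun i => congrFun hv (Sum.inr (Sum.inr i))
  rw [zero_smul, zero_sub, neg_eq_zero] at h2
  have hv1 : (fun i => v (Sum.inl i)) = 0 := qs_pd_mulVec_eq_zero hKA h2
  rw [zero_smul, zero_add, hv1, mulVec_zero, zero_add] at h3
  have hv3 : (fun i => v (Sum.inr (Sum.inr i))) = 0 := qs_pd_mulVec_eq_zero hKK h3
  rw [hv3, mulVec_zero, sub_zero] at h1
  have hv2 : (fun i => v (Sum.inr (Sum.inl i))) = 0 := qs_pd_mulVec_eq_zero hKA h1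
  apply hv0
  funext i
  rcases i with i | i | i
  · exact congrFun hv1 i
  · exact congrFun hv2 i
  · exact congrFun hv3 i

private lemma qs_index (hn : 0 < n) (KA : Matrix (Fin n) (Fin n) ℝ)
    (MM KK : Matrix (Fin m) (Fin m) ℝ) (D : Matrix (Fin m) (Fin n) ℝ)
    (hKA : KA.PosDef) (hMM : MM.PosDef) (hKK : KK.PosDef) (lam : ℝ)
    (h : (lam • (fromBlocks 0 0 0 (fromBlocks KA 0 0 MM) :
        Matrix (Fin n ⊕ (Fin n ⊕ Fin m)) (Fin n ⊕ (Fin n ⊕ Fin m)) ℝ)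
      - fromBlocks 0 (fromCols (-KA) Dᵀ) (fromRows KA (-D))
          (fromBlocks 0 0 0 (-KK))).det ≠ 0) :
    (((lam • (fromBlocks 0 0 0 (fromBlocks KA 0 0 MM) :
        Matrix (Fin n ⊕ (Fin n ⊕ Fin m)) (Fin n ⊕ (Fin n ⊕ Fin m)) ℝ)
      - fromBlocks 0 (fromCols (-KA) Dᵀ) (fromRows KA (-D)) (fromBlocks 0 0 0 (-KK)))⁻¹
        * fromBlocks 0 0 0 (fromBlocks KA 0 0 MM)) ^ 2).rank
      = (((lam • (fromBlocks 0 0 0 (fromBlocks KA 0 0 MM) :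
        Matrix (Fin n ⊕ (Fin n ⊕ Fin m)) (Fin n ⊕ (Fin n ⊕ Fin m)) ℝ)
      - fromBlocks 0 (fromCols (-KA) Dᵀ) (fromRows KA (-D)) (fromBlocks 0 0 0 (-KK)))⁻¹
        * fromBlocks 0 0 0 (fromBlocks KA 0 0 MM)) ^ 3).rank
    ∧ (((lam • (fromBlocks 0 0 0 (fromBlocks KA 0 0 MM) :
        Matrix (Fin n ⊕ (Fin n ⊕ Fin m)) (Fin n ⊕ (Fin n ⊕ Fin m)) ℝ)
      - fromBlocks 0 (fromCols (-KA) Dᵀ) (fromRows KA (-D)) (fromBlocks 0 0 0 (-KK)))⁻¹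
        * fromBlocks 0 0 0 (fromBlocks KA 0 0 MM)) ^ 2).rank
      < ((lam • (fromBlocks 0 0 0 (fromBlocks KA 0 0 MM) :
        Matrix (Fin n ⊕ (Fin n ⊕ Fin m)) (Fin n ⊕ (Fin n ⊕ Fin m)) ℝ)
      - fromBlocks 0 (fromCols (-KA) Dᵀ) (fromRows KA (-D)) (fromBlocks 0 0 0 (-KK)))⁻¹
        * fromBlocks 0 0 0 (fromBlocks KA 0 0 MM)).rank := by
  set E : Matrix (Fin n ⊕ (Fin n ⊕ Fin m)) (Fin n ⊕ (Fin n ⊕ Fin m)) ℝ :=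
    fromBlocks 0 0 0 (fromBlocks KA 0 0 MM) with hEdef
  set S : Matrix (Fin n ⊕ (Fin n ⊕ Fin m)) (Fin n ⊕ (Fin n ⊕ Fin m)) ℝ :=
    lam • E - fromBlocks 0 (fromCols (-KA) Dᵀ) (fromRows KA (-D)) (fromBlocks 0 0 0 (-KK))
    with hSdef
  set N : Matrix (Fin n ⊕ (Fin n ⊕ Fin m)) (Fin n ⊕ (Fin n ⊕ Fin m)) ℝ := S⁻¹ * E with hNdef
  have hS : IsUnit S.det := isUnit_iff_ne_zero.mpr h
  have hcancel : ∀ x : (Fin n ⊕ (Fin n ⊕ Fin m)) → ℝ, S *ᵥ (S⁻¹ *ᵥ x) = x := by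
    intro x; rw [mulVec_mulVec, mul_nonsing_inv _ hS, one_mulVec]
  have hcancel' : ∀ x : (Fin n ⊕ (Fin n ⊕ Fin m)) → ℝ, S⁻¹ *ᵥ (S *ᵥ x) = x := by
    intro x; rw [mulVec_mulVec, nonsing_inv_mul _ hS, one_mulVec]
  have hinj : ∀ x : (Fin n ⊕ (Fin n ⊕ Fin m)) → ℝ, S⁻¹ *ᵥ x = 0 → x = 0 := by
    intro x hx
    rw [← hcancel x, hx, mulVec_zero]
  have hN : ∀ v : (Fin n ⊕ (Fin n ⊕ Fin m)) → ℝ, N *ᵥ v = S⁻¹ *ᵥ (E *ᵥ v) := by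
    intro v; rw [hNdef, ← mulVec_mulVec]
  -- characterization of the kernel of N²
  have K2 : ∀ v : (Fin n ⊕ (Fin n ⊕ Fin m)) → ℝ,
      N *ᵥ (N *ᵥ v) = 0 ↔
        D *ᵥ (fun i => v (Sum.inr (Sum.inl i)))
          + MM *ᵥ (fun i => v (Sum.inr (Sum.inr i))) = 0 := by
    intro v
    constructor
    · intro hv
      set w : (Fin n ⊕ (Fin n ⊕ Fin m)) → ℝ := N *ᵥ v with hw
      have hEw : E *ᵥ w = 0 := by
        apply hinj
        rw [← hN w]; exact hv
      rw [hEdef, qs_E_mulVec] at hEw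
      have hw2 : KA *ᵥ (fun i => w (Sum.inr (Sum.inl i))) = 0 :=
        funext fun i => congrFun hEw (Sum.inr (Sum.inl i))
      have hw3 : MM *ᵥ (fun i => w (Sum.inr (Sum.inr i))) = 0 :=
        funext fun i => congrFun hEw (Sum.inr (Sum.inr i))
      have hw2' : (fun i => w (Sum.inr (Sum.inl i))) = 0 := qs_pd_mulVec_eq_zero hKA hw2
      have hw3' : (fun i => w (Sum.inr (Sum.inr i))) = 0 := qs_pd_mulVec_eq_zero hMM hw3
      have hSw : S *ᵥ w = E *ᵥ v := by rw [hw, hN, hcancel]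
      rw [hSdef, hEdef, qs_S_mulVec, qs_E_mulVec] at hSw
      have c2 : lam • (KA *ᵥ (fun i => w (Sum.inr (Sum.inl i))))
          - KA *ᵥ (fun i => w (Sum.inl i))
          = KA *ᵥ (fun i => v (Sum.inr (Sum.inl i))) :=
        funext fun i => congrFun hSw (Sum.inr (Sum.inl i))
      have c3 : lam • (MM *ᵥ (fun i => w (Sum.inr (Sum.inr i))))
          + (D *ᵥ (fun i => w (Sum.inl i)) + KK *ᵥ (fun i => w (Sum.inr (Sum.inr i))))
          = MM *ᵥ (fun i => v (Sum.inr (Sum.inr i))) :=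
        funext fun i => congrFun hSw (Sum.inr (Sum.inr i))
      rw [hw2'] at c2
      rw [hw3'] at c3
      rw [mulVec_zero, smul_zero, zero_sub] at c2
      rw [mulVec_zero, smul_zero, mulVec_zero, zero_add, add_zero] at c3
      have hw1 : (fun i => w (Sum.inl i)) = -(fun i => v (Sum.inr (Sum.inl i))) := by
        have hz : KA *ᵥ ((fun i => w (Sum.inl i)) + fun i => v (Sum.inr (Sum.inl i))) = 0 := by
          rw [mulVec_add, ← c2]; abel
        have h0 := qs_pd_mulVec_eq_zero hKA hz
        rwa [add_eq_zero_iff_eq_neg] at h0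
      rw [hw1, mulVec_neg] at c3
      rw [← c3]
      abel
    · intro hv
      set w' : (Fin n ⊕ (Fin n ⊕ Fin m)) → ℝ :=
        Sum.elim (-(fun i => v (Sum.inr (Sum.inl i)))) 0 with hw'
      have hSw' : S *ᵥ w' = E *ᵥ v := by
        rw [hSdef, hEdef, qs_S_mulVec, qs_E_mulVec]
        have e1 : (fun i => w' (Sum.inr (Sum.inl i))) = (0 : Fin n → ℝ) := rfl
        have e2 : (fun i => w' (Sum.inr (Sum.inr i))) = (0 : Fin m → ℝ) := rfl
        have e3 : (fun i => w' (Sum.inl i)) = -(fun i => v (Sum.inr (Sum.inl i))) := rfl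
        rw [e1, e2, e3]
        funext i
        rcases i with i | i | i
        · simp
        · simp [mulVec_neg, neg_neg]
        · have : MM *ᵥ (fun i => v (Sum.inr (Sum.inr i)))
              = -(D *ᵥ fun i => v (Sum.inr (Sum.inl i))) := by
            rw [eq_neg_iff_add_eq_zero, add_comm]; exact hv
          simp [mulVec_neg, this]
      have hNv : N *ᵥ v = w' := by
        rw [hN, ← hSw', hcancel']
      rw [hNv, hN]
      have hEw' : E *ᵥ w' = 0 := by
        rw [hEdef, qs_E_mulVec]
        have e1 : (fun i => w' (Sum.inr (Sum.inl i))) = (0 : Fin n → ℝ) := rfl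
        have e2 : (fun i => w' (Sum.inr (Sum.inr i))) = (0 : Fin m → ℝ) := rfl
        rw [e1, e2]
        funext i
        rcases i with i | i | i <;> simp
      rw [hEw', mulVec_zero]
  -- kernel of N³ equals kernel of N²
  have K3 : ∀ v : (Fin n ⊕ (Fin n ⊕ Fin m)) → ℝ,
      N *ᵥ (N *ᵥ (N *ᵥ v)) = 0 → N *ᵥ (N *ᵥ v) = 0 := by
    intro v hv
    set u : (Fin n ⊕ (Fin n ⊕ Fin m)) → ℝ := N *ᵥ v with hu
    have hu23 : D *ᵥ (fun i => u (Sum.inr (Sum.inl i)))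
        + MM *ᵥ (fun i => u (Sum.inr (Sum.inr i))) = 0 := (K2 u).mp hv
    have hSu : S *ᵥ u = E *ᵥ v := by rw [hu, hN, hcancel]
    rw [hSdef, hEdef, qs_S_mulVec, qs_E_mulVec] at hSu
    have c1 : KA *ᵥ (fun i => u (Sum.inr (Sum.inl i)))
        - Dᵀ *ᵥ (fun i => u (Sum.inr (Sum.inr i))) = 0 :=
      funext fun i => congrFun hSu (Sum.inl i)
    have c2 : lam • (KA *ᵥ (fun i => u (Sum.inr (Sum.inl i))))
        - KA *ᵥ (fun i => u (Sum.inl i))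
        = KA *ᵥ (fun i => v (Sum.inr (Sum.inl i))) :=
      funext fun i => congrFun hSu (Sum.inr (Sum.inl i))
    have c3 : lam • (MM *ᵥ (fun i => u (Sum.inr (Sum.inr i))))
        + (D *ᵥ (fun i => u (Sum.inl i)) + KK *ᵥ (fun i => u (Sum.inr (Sum.inr i))))
        = MM *ᵥ (fun i => v (Sum.inr (Sum.inr i))) :=
      funext fun i => congrFun hSu (Sum.inr (Sum.inr i))
    rw [sub_eq_zero] at c1
    -- the sign argument: u₃ = 0
    have hu3 : (fun i => u (Sum.inr (Sum.inr i))) = 0 := by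
      by_contra hne
      have hpos : 0 < dotProduct (star (fun i => u (Sum.inr (Sum.inr i))))
          (MM *ᵥ (fun i => u (Sum.inr (Sum.inr i)))) := hMM.dotProduct_mulVec_pos hne
      have hMMu : MM *ᵥ (fun i => u (Sum.inr (Sum.inr i)))
          = -(D *ᵥ (fun i => u (Sum.inr (Sum.inl i)))) := by
        rw [eq_neg_iff_add_eq_zero, add_comm]; exact hu23
      have hdot : dotProduct (fun i => u (Sum.inr (Sum.inr i)))
            (MM *ᵥ (fun i => u (Sum.inr (Sum.inr i))))
          = -(dotProduct (fun i => u (Sum.inr (Sum.inl i)))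
              (KA *ᵥ (fun i => u (Sum.inr (Sum.inl i))))) := by
        rw [hMMu, dotProduct_neg, dotProduct_mulVec, ← mulVec_transpose, ← c1,
          dotProduct_comm]
      have hnn : 0 ≤ dotProduct (star (fun i => u (Sum.inr (Sum.inl i))))
          (KA *ᵥ (fun i => u (Sum.inr (Sum.inl i)))) := hKA.posSemidef.dotProduct_mulVec_nonneg _
      simp only [star_trivial] at hpos hnn
      rw [hdot] at hpos
      linarith
    rw [hu3] at c1 c3
    rw [mulVec_zero] at c1
    have hu2 : (fun i => u (Sum.inr (Sum.inl i))) = 0 := qs_pd_mulVec_eq_zero hKA c1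
    rw [hu2] at c2
    rw [mulVec_zero, smul_zero, zero_sub] at c2
    rw [mulVec_zero, mulVec_zero, smul_zero, zero_add, add_zero] at c3
    have hv2 : (fun i => v (Sum.inr (Sum.inl i))) = -(fun i => u (Sum.inl i)) := by
      have hz : KA *ᵥ ((fun i => v (Sum.inr (Sum.inl i))) + fun i => u (Sum.inl i)) = 0 := by
        rw [mulVec_add, ← c2]; abel
      have h0 := qs_pd_mulVec_eq_zero hKA hz
      rwa [add_eq_zero_iff_eq_neg] at h0
    apply (K2 v).mpr
    rw [hv2, ← c3, mulVec_neg]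
    abel
  -- witness of index ≥ 2
  set e : Fin n → ℝ := Pi.single ⟨0, hn⟩ 1 with he
  set v₀ : (Fin n ⊕ (Fin n ⊕ Fin m)) → ℝ :=
    Sum.elim 0 (Sum.elim e (-(MM⁻¹ *ᵥ (D *ᵥ e)))) with hv₀
  have hMMu : IsUnit MM.det := isUnit_iff_ne_zero.mpr hMM.det_pos.ne'
  have hv₀K2 : N *ᵥ (N *ᵥ v₀) = 0 := by
    apply (K2 v₀).mpr
    have e2 : (fun i => v₀ (Sum.inr (Sum.inl i))) = e := rfl
    have e3 : (fun i => v₀ (Sum.inr (Sum.inr i))) = -(MM⁻¹ *ᵥ (D *ᵥ e)) := rfl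
    rw [e2, e3, mulVec_neg, mulVec_mulVec, mul_nonsing_inv _ hMMu, one_mulVec, add_neg_cancel]
  have hv₀N : N *ᵥ v₀ ≠ 0 := by
    intro h0
    have hE0 : E *ᵥ v₀ = 0 := hinj _ (by rw [← hN]; exact h0)
    rw [hEdef, qs_E_mulVec] at hE0
    have hKAe : KA *ᵥ (fun i => v₀ (Sum.inr (Sum.inl i))) = 0 :=
      funext fun i => congrFun hE0 (Sum.inr (Sum.inl i))
    have : e = 0 := qs_pd_mulVec_eq_zero hKA hKAe
    have h1 : e ⟨0, hn⟩ = 1 := Pi.single_eq_same _ _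
    rw [this] at h1
    simpa using h1
  -- translate kernels to ranks
  have hpow2 : ∀ x : (Fin n ⊕ (Fin n ⊕ Fin m)) → ℝ, (N ^ 2) *ᵥ x = N *ᵥ (N *ᵥ x) := by
    intro x; rw [pow_two, ← mulVec_mulVec]
  have hpow3 : ∀ x : (Fin n ⊕ (Fin n ⊕ Fin m)) → ℝ,
      (N ^ 3) *ᵥ x = N *ᵥ (N *ᵥ (N *ᵥ x)) := by
    intro x
    rw [pow_succ', ← mulVec_mulVec, hpow2]
  have hker23 : LinearMap.ker (N ^ 2).mulVecLin = LinearMap.ker (N ^ 3).mulVecLin := by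
    ext x
    simp only [LinearMap.mem_ker, mulVecLin_apply]
    constructor
    · intro hx
      rw [hpow3, hpow2] at *
      rw [hx, mulVec_zero]
    · intro hx
      rw [hpow2]
      exact K3 x (by rw [← hpow3]; exact hx)
  have hker12 : LinearMap.ker N.mulVecLin < LinearMap.ker (N ^ 2).mulVecLin := by
    rw [SetLike.lt_iff_le_and_exists]
    constructor
    · intro x hx
      simp only [LinearMap.mem_ker, mulVecLin_apply] at hx ⊢
      rw [hpow2, hx, mulVec_zero]
    · exact ⟨v₀, by simp only [LinearMap.mem_ker, mulVecLin_apply]; rw [hpow2]; exact hv₀K2,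
        by simp only [LinearMap.mem_ker, mulVecLin_apply]; exact hv₀N⟩
  have r1 := LinearMap.finrank_range_add_finrank_ker (N.mulVecLin)
  have r2 := LinearMap.finrank_range_add_finrank_ker ((N ^ 2).mulVecLin)
  have r3 := LinearMap.finrank_range_add_finrank_ker ((N ^ 3).mulVecLin)
  have hkerlt := Submodule.finrank_lt_finrank_of_lt hker12
  have hkk : Module.finrank ℝ (LinearMap.ker (N ^ 2).mulVecLin)
      = Module.finrank ℝ (LinearMap.ker (N ^ 3).mulVecLin) := by rw [hker23]
  constructor
  · unfold Matrix.rank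
    omega
  · unfold Matrix.rank
    omega
end QSAux

/-- The pencil `(E, A)` of the semi-discretized quasi-static poroelastic
system is regular and has differentiation index exactly 2: (i) the pencil is
regular; (ii) with `V = W` spanning `ker E = ker Eᵀ`, one has `Wᵀ A V = 0`
(so the index is at least 2); (iii) the nilpotent part of `(λE - A)⁻¹ E`
stabilizes after two steps but not after one, i.e. the index is exactly 2. -/
theorem quasistatic_pencil_index_two
    {n m : ℕ} (hn : 0 < n) (KA : Matrix (Fin n) (Fin n) ℝ)
    (MM KK : Matrix (Fin m) (Fin m) ℝ) (D : Matrix (Fin m) (Fin n) ℝ)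
    (hKA : KA.PosDef) (hMM : MM.PosDef) (hKK : KK.PosDef) :
    (let E : Matrix (Fin n ⊕ (Fin n ⊕ Fin m)) (Fin n ⊕ (Fin n ⊕ Fin m)) ℝ :=
       fromBlocks 0 0 0 (fromBlocks KA 0 0 MM)
     let A : Matrix (Fin n ⊕ (Fin n ⊕ Fin m)) (Fin n ⊕ (Fin n ⊕ Fin m)) ℝ :=
       fromBlocks 0 (fromCols (-KA) Dᵀ) (fromRows KA (-D))
         (fromBlocks 0 0 0 (-KK))
     let V : Matrix (Fin n ⊕ (Fin n ⊕ Fin m)) (Fin n) ℝ :=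
       fromRows 1 0
     (∃ lam : ℝ, (lam • E - A).det ≠ 0) ∧
     Vᵀ * A * V = 0 ∧
     (∀ lam : ℝ, (lam • E - A).det ≠ 0 →
       (((lam • E - A)⁻¹ * E) ^ 2).rank = (((lam • E - A)⁻¹ * E) ^ 3).rank ∧
       (((lam • E - A)⁻¹ * E) ^ 2).rank < ((lam • E - A)⁻¹ * E).rank)) := by
  refine ⟨⟨0, qs_regular KA MM KK D hKA hKK⟩, ?_, fun lam h => qs_index hn KA MM KK D hKA hMM hKK lam h⟩
  show (fromRows (1 : Matrix (Fin n) (Fin n) ℝ) 0)ᵀ *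
      fromBlocks 0 (fromCols (-KA) Dᵀ) (fromRows KA (-D)) (fromBlocks 0 0 0 (-KK)) *
      fromRows 1 0 = 0
  rw [transpose_fromRows, Matrix.mul_assoc, fromBlocks_mul_fromRows]
  simp [fromCols_mul_fromRows]
end

section
/- The closed-loop matrix pencil (E, A_F) with E = blockdiag(0, K_A, M_M) and A_F = [[Mᵤᵀ F₁₁ Mᵤ, -K_A, Dᵀ],[K_A, 0, 0],[-D, 0, -K_K]] has differentiation index 1 whenever F₁₁ is nonsingular and Mᵤ is nonsingular: i.e., with V and W bases of ker E and ker Eᵀ respectively, Wᵀ A_F V is invertible. -/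
open Matrix

/-- The closed-loop pencil `(E, A_F)` has differentiation index 1 whenever
`F₁₁` and `Mᵤ` are nonsingular: with `V = W` spanning `ker E = ker Eᵀ`, the
matrix `Wᵀ A_F V = Mᵤᵀ F₁₁ Mᵤ` is invertible. -/
theorem closed_loop_pencil_index_one
    {n m : ℕ} (KA : Matrix (Fin n) (Fin n) ℝ)
    (MM KK : Matrix (Fin m) (Fin m) ℝ) (D : Matrix (Fin m) (Fin n) ℝ)
    (Mu F11 : Matrix (Fin n) (Fin n) ℝ)
    (hKA : KA.PosDef) (hMM : MM.PosDef) (hKK : KK.PosDef)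
    (hMu : IsUnit Mu.det) (hF11 : IsUnit F11.det) :
    (let AF : Matrix (Fin n ⊕ (Fin n ⊕ Fin m)) (Fin n ⊕ (Fin n ⊕ Fin m)) ℝ :=
       fromBlocks (Muᵀ * F11 * Mu) (fromCols (-KA) Dᵀ)
         (fromRows KA (-D)) (fromBlocks 0 0 0 (-KK))
     let V : Matrix (Fin n ⊕ (Fin n ⊕ Fin m)) (Fin n) ℝ := fromRows 1 0
     Vᵀ * AF * V = Muᵀ * F11 * Mu ∧ IsUnit (Vᵀ * AF * V).det) := by
  have h : (fromRows (1 : Matrix (Fin n) (Fin n) ℝ) (0 : Matrix (Fin n ⊕ Fin m) (Fin n) ℝ))ᵀ *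
      (fromBlocks (Muᵀ * F11 * Mu) (fromCols (-KA) Dᵀ)
        (fromRows KA (-D)) (fromBlocks 0 0 0 (-KK)) : Matrix (Fin n ⊕ (Fin n ⊕ Fin m)) (Fin n ⊕ (Fin n ⊕ Fin m)) ℝ) *
        (fromRows 1 0 : Matrix (Fin n ⊕ (Fin n ⊕ Fin m)) (Fin n) ℝ) = Muᵀ * F11 * Mu := by
    rw [transpose_fromRows, fromCols_mul_fromBlocks]
    simp [fromCols_mul_fromRows_eq_one_comm, fromCols_mul_fromRows]
  refine ⟨h, ?_⟩
  rw [h]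
  rw [Matrix.det_mul, Matrix.det_mul, Matrix.det_transpose]
  exact (hMu.mul hF11).mul hMu
end
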